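/- arXiv:2308.08886 — 3 statements merged into one kernel-verified Lean document; each statement's English description precedes it below -/
import Mathlib

section
/- Let ℓ : ℝ^k → ℝ be the multiclass logistic loss ℓ(f) = log(Σ_j exp(f_j)) − ⟨y, f⟩ with y in the probability simplex a one-hot vector, and let q be its second-order Taylor expansion at a point f, i.e. q(v) = ⟨∇ℓ(f), v⟩ + (1/2)⟨v, ∇²ℓ(f) v⟩ where ∇²ℓ(f) = diag(σ(f)) − σ(f)σ(f)^⊤ with σ(f) = softmax(f). Then the convex conjugate of q is q*(α) = (1/2)⟨β, diag(σ(f))^{-1} β⟩ if β^⊤ 1_k = 0, and +∞ otherwise, where β := α − ∇ℓ(f). -/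
open scoped BigOperators

lemma key_ineq {k : ℕ} (σ β v : Fin k → ℝ) (hσpos : ∀ j, 0 < σ j)
    (hσ1 : ∑ j, σ j = 1) (hβ0 : ∑ j, β j = 0) :
    (∑ j, β j * v j) - (1/2) * (∑ j, v j * (σ j * v j - (∑ l, σ l * v l) * σ j))
      ≤ (1/2) * ∑ j, β j * (β j / σ j) := by
  set c := ∑ l, σ l * v l with hc
  have hterm : ∀ j ∈ Finset.univ, β j * (v j - c) - (1/2) * (σ j * (v j - c)^2)
      ≤ (1/2) * (β j * (β j / σ j)) := by
    intro j _
    have hσj := hσpos j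
    have hrw : (1/2) * (β j * (β j / σ j)) = β j ^ 2 / (2 * σ j) := by
      field_simp
    rw [hrw, ← sub_nonneg]
    have h2 : β j ^ 2 / (2 * σ j) - (β j * (v j - c) - (1/2) * (σ j * (v j - c)^2))
        = (σ j * (v j - c) - β j)^2 / (2 * σ j) := by
      field_simp; ring
    rw [h2]
    positivity
  have hsum := Finset.sum_le_sum hterm
  have e1 : ∑ j, (β j * (v j - c) - (1/2) * (σ j * (v j - c)^2))
      = (∑ j, β j * v j) - c * (∑ j, β j) - (1/2) * (∑ j, σ j * v j * v j)
        + c * (∑ j, σ j * v j) - (c^2/2) * (∑ j, σ j) := by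
    rw [Finset.sum_congr rfl (fun j _ => show β j * (v j - c) - (1/2) * (σ j * (v j - c)^2)
      = (β j * v j - c * β j - (1/2) * (σ j * v j * v j) + c * (σ j * v j) - (c^2/2) * σ j) by ring)]
    simp [Finset.sum_sub_distrib, Finset.sum_add_distrib, ← Finset.mul_sum]
  have e2 : ∑ j, v j * (σ j * v j - c * σ j)
      = (∑ j, σ j * v j * v j) - c * (∑ j, σ j * v j) := by
    rw [Finset.sum_congr rfl (fun j _ => show v j * (σ j * v j - c * σ j)
      = σ j * v j * v j - c * (σ j * v j) by ring)]
    simp [Finset.sum_sub_distrib, ← Finset.mul_sum]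
  rw [e1, hβ0, hσ1, ← hc, ← Finset.mul_sum] at hsum
  rw [e2, ← hc]
  nlinarith [hsum]


/-- conjugate of the second-order Taylor model of the logistic loss.
With `σ(f)_j = exp(f_j)/Σ_l exp(f_l)`, `∇ℓ(f) = σ(f) − y` (`y` one-hot),
`q(v) = ⟨∇ℓ(f), v⟩ + (1/2)⟨v, (diag σ(f) − σ(f)σ(f)ᵀ) v⟩`. Then
`q*(α) = (1/2)⟨β, diag(σ(f))⁻¹ β⟩` if `1ᵀβ = 0`, else `+∞`, where `β = α − ∇ℓ(f)`. -/
theorem stmt2 (k : ℕ) (f y : Fin k → ℝ)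
    (hy : ∃ j0, y = fun j => if j = j0 then (1 : ℝ) else 0)
    (σ : Fin k → ℝ)
    (hσ : ∀ j, σ j = Real.exp (f j) / ∑ l, Real.exp (f l))
    (g : Fin k → ℝ) (hg : g = fun j => σ j - y j)
    (q : (Fin k → ℝ) → ℝ)
    (hq : ∀ v, q v = (∑ j, g j * v j)
        + (1/2) * (∑ j, v j * (σ j * v j - (∑ l, σ l * v l) * σ j)))
    (α : Fin k → ℝ) (β : Fin k → ℝ) (hβ : β = fun j => α j - g j) :
    (⨆ v : Fin k → ℝ, (((∑ j, α j * v j) - q v : ℝ) : EReal)) =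
      if ∑ j, β j = 0 then (((1/2) * ∑ j, β j * (β j / σ j) : ℝ) : EReal) else ⊤ := by
  -- value rewriting
  have hval : ∀ v : Fin k → ℝ, (∑ j, α j * v j) - q v
      = (∑ j, β j * v j) - (1/2) * (∑ j, v j * (σ j * v j - (∑ l, σ l * v l) * σ j)) := by
    intro v
    rw [hq v, hβ]
    have : ∑ j, (α j - g j) * v j = (∑ j, α j * v j) - ∑ j, g j * v j := by
      rw [← Finset.sum_sub_distrib]; exact Finset.sum_congr rfl fun j _ => by ring
    rw [this]; ring
  rcases Nat.eq_zero_or_pos k with hk | hk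
  · subst hk
    have hz : ∀ v : Fin 0 → ℝ, (((∑ j, α j * v j) - q v : ℝ) : EReal) = ((0:ℝ) : EReal) :=
      fun v => by rw [hval v]; simp
    rw [show (⨆ v : Fin 0 → ℝ, (((∑ j, α j * v j) - q v : ℝ) : EReal)) = ((0:ℝ) : EReal) from by
      simp only [hz]; exact iSup_const]
    norm_num
  -- positivity facts
  have hS : 0 < ∑ l, Real.exp (f l) :=
    Finset.sum_pos (fun l _ => Real.exp_pos _) (by simpa using Finset.univ_nonempty_iff.mpr ⟨⟨0, hk⟩⟩)
  have hσpos : ∀ j, 0 < σ j := fun j => by rw [hσ j]; positivity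
  have hσ1 : ∑ j, σ j = 1 := by
    rw [Finset.sum_congr rfl fun j _ => hσ j, ← Finset.sum_div, div_self (ne_of_gt hS)]
  by_cases h0 : ∑ j, β j = 0
  · rw [if_pos h0]
    apply le_antisymm
    · apply iSup_le
      intro v
      rw [hval v]
      exact_mod_cast key_ineq σ β v hσpos hσ1 h0
    · have hv0 : (∑ j, α j * (fun j => β j / σ j) j) - q (fun j => β j / σ j)
          = (1/2) * ∑ j, β j * (β j / σ j) := by
        rw [hval]
        have hc : ∑ l, σ l * (β l / σ l) = 0 := by
          rw [Finset.sum_congr rfl fun l _ => mul_div_cancel₀ (β l) (ne_of_gt (hσpos l))]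
          exact h0
        have h1 : ∑ j, β j * (β j / σ j) = ∑ j, β j * (β j / σ j) := rfl
        have h2 : ∑ j, (β j / σ j) * (σ j * (β j / σ j) - (∑ l, σ l * (β l / σ l)) * σ j)
            = ∑ j, β j * (β j / σ j) := by
          rw [hc]
          refine Finset.sum_congr rfl fun j _ => ?_
          rw [mul_div_cancel₀ (β j) (ne_of_gt (hσpos j))]
          ring
        rw [h2]; ring
      calc (((1/2) * ∑ j, β j * (β j / σ j) : ℝ) : EReal)
          = (((∑ j, α j * (fun j => β j / σ j) j) - q (fun j => β j / σ j) : ℝ) : EReal) := by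
            rw [hv0]
        _ ≤ _ := le_iSup (fun v : Fin k → ℝ => (((∑ j, α j * v j) - q v : ℝ) : EReal)) (fun j => β j / σ j)
  · rw [if_neg h0]
    rw [iSup_eq_top]
    intro b hb
    have hline : ∀ t : ℝ, (∑ j, α j * (fun _ => t) j) - q (fun _ => t) = t * (∑ j, β j) := by
      intro t
      rw [hval]
      have hc : ∑ l : Fin k, σ l * t = t := by
        rw [← Finset.sum_mul, hσ1, one_mul]
      have h2 : ∑ j : Fin k, t * (σ j * t - (∑ l : Fin k, σ l * t) * σ j) = 0 := by
        rw [hc]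
        refine Finset.sum_eq_zero fun j _ => by ring
      rw [h2, ← Finset.sum_mul]
      ring
    induction b with
    | bot =>
      exact ⟨fun _ => 0, by rw [show (((∑ j, α j * (fun _ => (0:ℝ)) j) - q (fun _ => (0:ℝ)) : ℝ)) = 0 by rw [hline 0]; ring]; exact EReal.bot_lt_coe 0⟩
    | coe r =>
      refine ⟨fun _ => (r + 1) / (∑ j, β j), ?_⟩
      rw [show (((∑ j, α j * (fun _ => (r+1)/(∑ j, β j)) j) - q (fun _ => (r+1)/(∑ j, β j)) : ℝ)) = r + 1 by
        rw [hline]; exact div_mul_cancel₀ _ h0]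
      exact_mod_cast (by linarith : r < r + 1)
    | top => exact absurd hb (lt_irrefl ⊤)
end

section
/- Let F(d) := ℓ(f⁰ − J d) + (μ/2)‖d‖² where ℓ : ℝ^k → ℝ is convex and differentiable, J : ℝ^p → ℝ^k is linear, f⁰ ∈ ℝ^k, and μ > 0. Let d* be the unique minimizer of F. If d* ≠ 0 then ⟨J^* ∇ℓ(f⁰), d*⟩ > 0, i.e., −d* is a descent direction for the composition w ↦ ℓ(f⁰ − J w) at w = 0 (equivalently for ℓ∘f at the linearization point). -/
open scoped RealInnerProductSpace


/-- first-order condition for convex differentiable functions -/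
lemma grad_ineq {n : ℕ} (ℓ : EuclideanSpace ℝ (Fin n) → ℝ)
    (hc : ConvexOn ℝ Set.univ ℓ) (hd : Differentiable ℝ ℓ)
    (x v : EuclideanSpace ℝ (Fin n)) :
    ℓ x + ⟪gradient ℓ x, v⟫ ≤ ℓ (x + v) := by
  set φ : ℝ → ℝ := fun t => ℓ (x + t • v) with hφ
  have hφconv : ConvexOn ℝ Set.univ φ := by
    have := hc.comp_affineMap (AffineMap.lineMap x (x + v))
    convert this using 1
    · rfl
    · rfl
    · rfl
    · rfl
    · rfl
    funext t
    simp [φ, AffineMap.lineMap_apply, Function.comp]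
    abel_nf
  have hcurve : HasDerivAt (fun t : ℝ => x + t • v) v 0 := by
    simpa using ((hasDerivAt_id (0:ℝ)).smul_const v).const_add x
  have hgrad : HasGradientAt ℓ (gradient ℓ x) x := (hd x).hasGradientAt
  have hfd : HasFDerivAt ℓ ((InnerProductSpace.toDual ℝ _) (gradient ℓ x)) x := hgrad
  have hφd : HasDerivAt φ ⟪gradient ℓ x, v⟫ 0 := by
    have h0 : HasFDerivAt ℓ ((InnerProductSpace.toDual ℝ _) (gradient ℓ x)) (x + (0:ℝ) • v) := by
      simpa using hfd
    have := h0.comp_hasDerivAt 0 hcurve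
    simp only [InnerProductSpace.toDual_apply_apply] at this
    exact this
  have hslope := hφconv.le_slope_of_hasDerivAt (Set.mem_univ (0:ℝ))
    (Set.mem_univ (1:ℝ)) one_pos hφd
  rw [slope_def_field] at hslope
  simp only [φ, one_smul, zero_smul, add_zero] at hslope
  have : ⟪gradient ℓ x, v⟫ ≤ ℓ (x + v) - ℓ x := by
    simpa using hslope
  linarith


/-- if `d*` is the minimizer of
`F(d) = ℓ(f⁰ − J d) + (μ/2)‖d‖²` with `ℓ` convex differentiable and `μ > 0`,
and `d* ≠ 0`, then `⟨J* ∇ℓ(f⁰), d*⟩ > 0`, i.e. `−d*` is a descent direction. -/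
theorem stmt4 (p k : ℕ) (μ : ℝ) (hμ : 0 < μ)
    (ℓ : EuclideanSpace ℝ (Fin k) → ℝ)
    (hℓconv : ConvexOn ℝ Set.univ ℓ)
    (hℓdiff : Differentiable ℝ ℓ)
    (J : EuclideanSpace ℝ (Fin p) →L[ℝ] EuclideanSpace ℝ (Fin k))
    (f0 : EuclideanSpace ℝ (Fin k))
    (F : EuclideanSpace ℝ (Fin p) → ℝ)
    (hF : ∀ d, F d = ℓ (f0 - J d) + (μ / 2) * ‖d‖ ^ 2)
    (dstar : EuclideanSpace ℝ (Fin p))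
    (hdstar : IsMinOn F Set.univ dstar)
    (hne : dstar ≠ 0) :
    0 < ⟪J.adjoint (gradient ℓ f0), dstar⟫ := by
  have hmin : F dstar ≤ F 0 := hdstar (Set.mem_univ 0)
  rw [hF dstar, hF 0] at hmin
  simp only [map_zero, sub_zero, norm_zero] at hmin
  -- gradient inequality at f0 with direction -(J dstar)
  have hgi := grad_ineq ℓ hℓconv hℓdiff f0 (-(J dstar))
  have hsub : f0 + -(J dstar) = f0 - J dstar := by abel
  rw [hsub, inner_neg_right] at hgi
  have hnorm : 0 < μ / 2 * ‖dstar‖ ^ 2 := by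
    have : 0 < ‖dstar‖ := norm_pos_iff.mpr hne
    positivity
  have key : 0 < ⟪gradient ℓ f0, J dstar⟫ := by nlinarith
  rwa [ContinuousLinearMap.adjoint_inner_left]
end

section
/- Let Q ∈ ℝ^{p×p} be symmetric positive definite and c ∈ ℝ^p. Consider the conjugate gradient iteration initialized at x⁰ = 0, r⁰ = p⁰ = c, with a^τ = ⟨r^{τ−1}, r^{τ−1}⟩/⟨p^{τ−1}, Q p^{τ−1}⟩, x^τ = x^{τ−1} + a^τ p^{τ−1}, r^τ = r^{τ−1} − a^τ Q p^{τ−1}, b^τ = ⟨r^τ, r^τ⟩/⟨r^{τ−1}, r^{τ−1}⟩, p^τ = r^τ + b^τ p^{τ−1}. Then for every τ ≥ 0, ⟨p^τ, c⟩ ≥ 0 and ⟨x^τ, c⟩ ≥ 0. -/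
open scoped BigOperators
open Matrix

/-- conjugate gradient started at `x⁰ = 0`, `r⁰ = p⁰ = c` for
`Q` symmetric positive definite produces iterates with `⟨pᵗ, c⟩ ≥ 0` and
`⟨xᵗ, c⟩ ≥ 0` for every `τ ≥ 0` (assuming nonzero denominators). -/
theorem stmt5 (n : ℕ) (Q : Matrix (Fin n) (Fin n) ℝ) (hQ : Q.PosDef)
    (c : Fin n → ℝ)
    (x r p : ℕ → (Fin n → ℝ)) (a b : ℕ → ℝ)
    (hx0 : x 0 = 0) (hr0 : r 0 = c) (hp0 : p 0 = c)
    (hden1 : ∀ τ, p τ ⬝ᵥ Q.mulVec (p τ) ≠ 0)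
    (hden2 : ∀ τ, r τ ⬝ᵥ r τ ≠ 0)
    (ha : ∀ τ, a (τ + 1) = (r τ ⬝ᵥ r τ) / (p τ ⬝ᵥ Q.mulVec (p τ)))
    (hx : ∀ τ, x (τ + 1) = x τ + a (τ + 1) • p τ)
    (hr : ∀ τ, r (τ + 1) = r τ - a (τ + 1) • Q.mulVec (p τ))
    (hb : ∀ τ, b (τ + 1) = (r (τ + 1) ⬝ᵥ r (τ + 1)) / (r τ ⬝ᵥ r τ))
    (hp : ∀ τ, p (τ + 1) = r (τ + 1) + b (τ + 1) • p τ) :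
    ∀ τ, 0 ≤ p τ ⬝ᵥ c ∧ 0 ≤ x τ ⬝ᵥ c := by
  have hself : ∀ v : Fin n → ℝ, 0 ≤ v ⬝ᵥ v := fun v =>
    Finset.sum_nonneg fun i _ => mul_self_nonneg _
  have hsym : ∀ v w : Fin n → ℝ, Q.mulVec v ⬝ᵥ w = v ⬝ᵥ Q.mulVec w := by
    intro v w
    rw [dotProduct_mulVec, ← mulVec_transpose]
    have h : Qᵀ = Q := by
      simpa [Matrix.IsHermitian, conjTranspose_eq_transpose_of_trivial] using hQ.1
    rw [h, dotProduct_comm]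
  have hrr : ∀ τ, 0 < r τ ⬝ᵥ r τ := fun τ => (hself _).lt_of_ne (Ne.symm (hden2 τ))
  have hpQp : ∀ τ, 0 < p τ ⬝ᵥ Q.mulVec (p τ) := by
    intro τ
    rcases eq_or_ne (p τ) 0 with h | h
    · exact absurd (by simp [h]) (hden1 τ)
    · simpa using hQ.dotProduct_mulVec_pos h
  have hapos : ∀ τ, 0 < a (τ + 1) := fun τ => (ha τ) ▸ div_pos (hrr τ) (hpQp τ)
  have hbpos : ∀ τ, 0 < b (τ + 1) := fun τ => (hb τ) ▸ div_pos (hrr (τ + 1)) (hrr τ)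
  -- explicit formula for Q p k
  have hQp : ∀ k, Q.mulVec (p k) = (a (k + 1))⁻¹ • (r k - r (k + 1)) := by
    intro k
    have h1 : a (k + 1) • Q.mulVec (p k) = r k - r (k + 1) := by
      rw [hr k, sub_sub_cancel]
    rw [← h1, inv_smul_smul₀ (hapos k).ne']
  -- the key orthogonality invariants of CG
  have key : ∀ τ, (∀ i, i < τ → r τ ⬝ᵥ r i = 0) ∧ (∀ i, i < τ → r τ ⬝ᵥ p i = 0) ∧
      (∀ i, i < τ → p τ ⬝ᵥ Q.mulVec (p i) = 0) := by
    intro τ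
    induction τ with
    | zero =>
      exact ⟨fun i hi => absurd hi (Nat.not_lt_zero i),
             fun i hi => absurd hi (Nat.not_lt_zero i),
             fun i hi => absurd hi (Nat.not_lt_zero i)⟩
    | succ τ ih =>
      obtain ⟨ihrr, ihrp, ihpQp⟩ := ih
      have rp_self : r τ ⬝ᵥ p τ = r τ ⬝ᵥ r τ := by
        cases τ with
        | zero => rw [hp0, hr0]
        | succ σ =>
          rw [hp σ, dotProduct_add, dotProduct_smul, ihrp σ (Nat.lt_succ_self σ)]
          simp
      have hrpnew : ∀ i, i < τ + 1 → r (τ + 1) ⬝ᵥ p i = 0 := by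
        intro i hi
        rw [hr τ, sub_dotProduct, smul_dotProduct]
        rcases Nat.lt_succ_iff_lt_or_eq.mp hi with h | rfl
        · rw [ihrp i h, hsym, ihpQp i h]
          simp
        · rw [rp_self, hsym, ha i, smul_eq_mul, div_mul_cancel₀ _ (hden1 i), sub_self]
      have hrrnew : ∀ i, i < τ + 1 → r (τ + 1) ⬝ᵥ r i = 0 := by
        intro i hi
        cases i with
        | zero =>
          rw [hr0, ← hp0]
          exact hrpnew 0 (Nat.succ_pos τ)
        | succ j =>
          have hrj : r (j + 1) = p (j + 1) - b (j + 1) • p j := by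
            rw [hp j]; abel
          rw [hrj, dotProduct_sub, dotProduct_smul, hrpnew (j + 1) hi,
            hrpnew j (Nat.lt_of_succ_lt hi)]
          simp
      have hpQnew : ∀ i, i < τ + 1 → p (τ + 1) ⬝ᵥ Q.mulVec (p i) = 0 := by
        intro i hi
        rw [hp τ, add_dotProduct, smul_dotProduct]
        rcases Nat.lt_succ_iff_lt_or_eq.mp hi with h | rfl
        · rw [ihpQp i h, hQp i, dotProduct_smul, dotProduct_sub,
            hrrnew i (Nat.lt_succ_of_lt h), hrrnew (i + 1) (Nat.succ_lt_succ h)]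
          simp
        · rw [hQp i, dotProduct_smul, dotProduct_sub, hrrnew i (Nat.lt_succ_self i),
            zero_sub, hb i, ha i]
          have h1 : p i ⬝ᵥ r i = r i ⬝ᵥ r i := by rw [dotProduct_comm, rp_self]
          have h2 : p i ⬝ᵥ r (i + 1) = 0 := by
            rw [dotProduct_comm]; exact hrpnew i (Nat.lt_succ_self i)
          simp only [dotProduct_smul, smul_eq_mul, dotProduct_sub, h1, h2, sub_zero]
          field_simp [hden1 i, hden2 i]
          ring
      exact ⟨hrrnew, hrpnew, hpQnew⟩
  have hrc : ∀ τ, 1 ≤ τ → r τ ⬝ᵥ c = 0 := by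
    intro τ hτ
    rw [← hr0]
    exact (key τ).1 0 hτ
  have hpc : ∀ τ, 0 ≤ p τ ⬝ᵥ c := by
    intro τ
    induction τ with
    | zero => rw [hp0]; exact hself c
    | succ σ ih =>
      rw [hp σ, add_dotProduct, smul_dotProduct, hrc (σ + 1) (Nat.succ_le_succ (Nat.zero_le σ)),
        smul_eq_mul]
      have := mul_nonneg (hbpos σ).le ih
      linarith
  intro τ
  refine ⟨hpc τ, ?_⟩
  induction τ with
  | zero => simp [hx0]
  | succ σ ih =>
    rw [hx σ, add_dotProduct, smul_dotProduct, smul_eq_mul]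
    nlinarith [hapos σ, hpc σ]
end
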